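/- arXiv:2101.07008 — 2 statements merged into one kernel-verified Lean document; each statement's English description precedes it below -/
import Mathlib

section
/- Let Ω ⊆ ℝⁿ be open, p > 1, A(x) a symmetric positive definite matrix field on Ω, u : Ω → ℝ differentiable with u ≥ 0, and v : Ω → ℝ positive and differentiable. Define L(u,v) = |∇u|_A^p − p (u^{p−1}/v^{p−1}) |∇v|_A^{p−2} ⟨A∇u, ∇v⟩ + (p−1) (u^p/v^p) |∇v|_A^p, where |ξ|_A² = ⟨A(x)ξ,ξ⟩. Then L(u,v) ≥ 0 pointwise on Ω. -/
open Matrix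

/-- Cauchy–Schwarz for a real positive semidefinite matrix. -/
lemma psd_cauchy_schwarz {n : ℕ} {B : Matrix (Fin n) (Fin n) ℝ} (hB : B.PosSemidef)
    (ξ η : Fin n → ℝ) :
    (B.mulVec ξ ⬝ᵥ η) ^ 2 ≤ (B.mulVec ξ ⬝ᵥ ξ) * (B.mulVec η ⬝ᵥ η) := by
  have hBt : Bᵀ = B := by
    have := hB.1
    simpa [Matrix.IsHermitian, Matrix.conjTranspose_eq_transpose_of_trivial] using this
  have hsym : B.mulVec η ⬝ᵥ ξ = B.mulVec ξ ⬝ᵥ η := by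
    calc B.mulVec η ⬝ᵥ ξ = ξ ⬝ᵥ B.mulVec η := dotProduct_comm _ _
      _ = (ξ ᵥ* B) ⬝ᵥ η := dotProduct_mulVec _ _ _
      _ = (Bᵀ.mulVec ξ) ⬝ᵥ η := by rw [Matrix.mulVec_transpose]
      _ = B.mulVec ξ ⬝ᵥ η := by rw [hBt]
  have hq : ∀ t : ℝ, 0 ≤ (B.mulVec η ⬝ᵥ η) * (t * t)
      + (2 * (B.mulVec ξ ⬝ᵥ η)) * t + (B.mulVec ξ ⬝ᵥ ξ) := by
    intro t
    have h0 : 0 ≤ star (ξ + t • η) ⬝ᵥ B.mulVec (ξ + t • η) := hB.dotProduct_mulVec_nonneg _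
    have hexp : star (ξ + t • η) ⬝ᵥ B.mulVec (ξ + t • η)
        = (B.mulVec η ⬝ᵥ η) * (t * t) + (2 * (B.mulVec ξ ⬝ᵥ η)) * t
          + (B.mulVec ξ ⬝ᵥ ξ) := by
      have hstar : star (ξ + t • η) = ξ + t • η := by simp
      rw [hstar, Matrix.mulVec_add, Matrix.mulVec_smul, dotProduct_add,
        add_dotProduct, add_dotProduct, smul_dotProduct, dotProduct_smul,
        smul_dotProduct, dotProduct_smul]
      have h1 : ξ ⬝ᵥ B.mulVec ξ = B.mulVec ξ ⬝ᵥ ξ := dotProduct_comm _ _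
      have h2 : ξ ⬝ᵥ B.mulVec η = B.mulVec η ⬝ᵥ ξ := dotProduct_comm _ _
      have h3 : η ⬝ᵥ B.mulVec ξ = B.mulVec ξ ⬝ᵥ η := dotProduct_comm _ _
      have h4 : η ⬝ᵥ B.mulVec η = B.mulVec η ⬝ᵥ η := dotProduct_comm _ _
      rw [h1, h2, h3, h4, hsym]
      simp only [smul_eq_mul]
      ring
    linarith [hexp ▸ h0]
  have hd := discrim_le_zero hq
  rw [discrim] at hd
  nlinarith [hd]

/-- Young-type inequality: `p * (a * d ^ (p-1)) ≤ a ^ p + (p-1) * d ^ p` for `a, d ≥ 0`, `1 < p`. -/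
lemma young_aux {a d p : ℝ} (ha : 0 ≤ a) (hd : 0 ≤ d) (hp : 1 < p) :
    p * (a * d ^ (p - 1)) ≤ a ^ p + (p - 1) * d ^ p := by
  have hp0 : (0:ℝ) < p := lt_trans one_pos hp
  have hp1 : (0:ℝ) < p - 1 := by linarith
  have hpq : p.HolderConjugate (p / (p - 1)) := .conjExponent hp
  have hy := Real.young_inequality_of_nonneg ha (Real.rpow_nonneg hd (p - 1)) hpq
  have hq0 : (0:ℝ) < p / (p - 1) := div_pos hp0 hp1
  have hdq : (d ^ (p - 1)) ^ (p / (p - 1)) = d ^ p := by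
    rw [← Real.rpow_mul hd]
    congr 1
    field_simp
  rw [hdq] at hy
  have h2 : a * d ^ (p - 1) ≤ a ^ p / p + d ^ p * (p - 1) / p := by
    have : d ^ p / (p / (p - 1)) = d ^ p * (p - 1) / p := by
      field_simp
    linarith [hy, this ▸ hy]
  calc p * (a * d ^ (p - 1)) ≤ p * (a ^ p / p + d ^ p * (p - 1) / p) :=
        mul_le_mul_of_nonneg_left h2 hp0.le
    _ = a ^ p + (p - 1) * d ^ p := by field_simp

/-- First-order Picone inequality with matrix weight: `L(u,v) ≥ 0` pointwise. -/
theorem picone_L_nonneg {n : ℕ} (Ω : Set (EuclideanSpace ℝ (Fin n))) (hΩ : IsOpen Ω)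
    (p : ℝ) (hp : 1 < p)
    (A : EuclideanSpace ℝ (Fin n) → Matrix (Fin n) (Fin n) ℝ)
    (hA : ∀ x ∈ Ω, (A x).PosDef)
    (u v : EuclideanSpace ℝ (Fin n) → ℝ)
    (hu : ∀ x ∈ Ω, DifferentiableAt ℝ u x) (hu0 : ∀ x ∈ Ω, 0 ≤ u x)
    (hv : ∀ x ∈ Ω, DifferentiableAt ℝ v x) (hv0 : ∀ x ∈ Ω, 0 < v x)
    (x : EuclideanSpace ℝ (Fin n)) (hx : x ∈ Ω) :
    let g : (EuclideanSpace ℝ (Fin n) → ℝ) → Fin n → ℝ :=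
      fun f i => fderiv ℝ f x (EuclideanSpace.single i 1)
    let nA : (Fin n → ℝ) → ℝ := fun ξ => Real.sqrt ((A x).mulVec ξ ⬝ᵥ ξ)
    0 ≤ nA (g u) ^ p
        - p * (u x ^ (p - 1) / v x ^ (p - 1)) * nA (g v) ^ (p - 2)
            * ((A x).mulVec (g u) ⬝ᵥ g v)
        + (p - 1) * (u x ^ p / v x ^ p) * nA (g v) ^ p := by
  intro g nA
  have hAx : (A x).PosDef := hA x hx
  have hpsd : (A x).PosSemidef := hAx.posSemidef
  have hp0 : (0:ℝ) < p := lt_trans one_pos hp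
  have hp1 : (0:ℝ) < p - 1 := by linarith
  set gu : Fin n → ℝ := g u with hgu
  set gv : Fin n → ℝ := g v with hgv
  set qu : ℝ := (A x).mulVec gu ⬝ᵥ gu with hqu
  set qv : ℝ := (A x).mulVec gv ⬝ᵥ gv with hqv
  set c : ℝ := (A x).mulVec gu ⬝ᵥ gv with hc
  have hqu0 : 0 ≤ qu := by
    have := hpsd.dotProduct_mulVec_nonneg gu
    simpa [hqu, dotProduct_comm] using this
  have hqv0 : 0 ≤ qv := by
    have := hpsd.dotProduct_mulVec_nonneg gv
    simpa [hqv, dotProduct_comm] using this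
  set a : ℝ := Real.sqrt qu with hadef
  set b : ℝ := Real.sqrt qv with hbdef
  have ha : 0 ≤ a := Real.sqrt_nonneg _
  have hb : 0 ≤ b := Real.sqrt_nonneg _
  have ha2 : a ^ 2 = qu := Real.sq_sqrt hqu0
  have hb2 : b ^ 2 = qv := Real.sq_sqrt hqv0
  -- Cauchy–Schwarz
  have hcs2 : c ^ 2 ≤ qu * qv := psd_cauchy_schwarz hpsd gu gv
  have hcs : c ≤ a * b := by
    have h1 : c ≤ |c| := le_abs_self c
    have h2 : |c| = Real.sqrt (c ^ 2) := (Real.sqrt_sq_eq_abs c).symm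
    have h3 : Real.sqrt (c ^ 2) ≤ Real.sqrt (qu * qv) := Real.sqrt_le_sqrt hcs2
    have h4 : Real.sqrt (qu * qv) = a * b := Real.sqrt_mul hqu0 qv
    linarith [h1, h2 ▸ h1, h4 ▸ h3, h2.symm ▸ (h4 ▸ h3)]
  -- the key cross-term estimate
  have hkey : b ^ (p - 2) * c ≤ a * b ^ (p - 1) := by
    rcases eq_or_lt_of_le hb with hb0 | hbpos
    · -- b = 0
      have hqv0' : qv = 0 := by rw [← hb2, ← hb0]; ring
      have hc0 : c = 0 := by nlinarith [hcs2, sq_nonneg c]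
      rw [hc0, ← hb0]
      have : (0:ℝ) ^ (p - 1) = 0 := Real.zero_rpow (by linarith)
      rw [this]
      simp
    · -- b > 0
      have hmul : b ^ (p - 2) * c ≤ b ^ (p - 2) * (a * b) :=
        mul_le_mul_of_nonneg_left hcs (Real.rpow_nonneg hb _)
      have heq : b ^ (p - 2) * (a * b) = a * b ^ (p - 1) := by
        have : b ^ (p - 2) * b = b ^ (p - 1) := by
          nth_rewrite 2 [← Real.rpow_one b]
          rw [← Real.rpow_add hbpos]
          ring_nf
        calc b ^ (p - 2) * (a * b) = a * (b ^ (p - 2) * b) := by ring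
          _ = a * b ^ (p - 1) := by rw [this]
      linarith [heq ▸ hmul]
  -- abbreviations
  set t : ℝ := u x / v x with htdef
  have ht : 0 ≤ t := div_nonneg (hu0 x hx) (hv0 x hx).le
  have hup : u x ^ (p - 1) / v x ^ (p - 1) = t ^ (p - 1) :=
    (Real.div_rpow (hu0 x hx) (hv0 x hx).le _).symm
  have hup' : u x ^ p / v x ^ p = t ^ p :=
    (Real.div_rpow (hu0 x hx) (hv0 x hx).le _).symm
  -- Young's inequality with d = t * b
  have hyoung : p * (a * ((t * b) ^ (p - 1))) ≤ a ^ p + (p - 1) * (t * b) ^ p :=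
    young_aux ha (mul_nonneg ht hb) hp
  have htb1 : (t * b) ^ (p - 1) = t ^ (p - 1) * b ^ (p - 1) := Real.mul_rpow ht hb
  have htbp : (t * b) ^ p = t ^ p * b ^ p := Real.mul_rpow ht hb
  rw [htb1, htbp] at hyoung
  -- combine
  have hcross : p * t ^ (p - 1) * (b ^ (p - 2) * c) ≤ p * t ^ (p - 1) * (a * b ^ (p - 1)) :=
    mul_le_mul_of_nonneg_left hkey
      (mul_nonneg hp0.le (Real.rpow_nonneg ht _))
  show 0 ≤ nA gu ^ p - p * (u x ^ (p - 1) / v x ^ (p - 1)) * nA gv ^ (p - 2) * c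
      + (p - 1) * (u x ^ p / v x ^ p) * nA gv ^ p
  have hna : nA gu = a := rfl
  have hnb : nA gv = b := rfl
  rw [hna, hnb, hup, hup']
  nlinarith [hcross, hyoung]
end

section
/- Let Ω ⊆ ℝⁿ be a bounded domain, W ∈ C²(Ω) and H ∈ L¹_loc(Ω) positive, and suppose there exists v ∈ C⁴(Ω) with v > 0, −Δv > 0 a.e., and Δ(W(x)Δv) ≥ H(x) v on Ω. Then for all real-valued u ∈ C²_c(Ω) with u ≥ 0, ∫_Ω W(x)|Δu|² dx ≥ ∫_Ω H(x) u² dx. -/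
open MeasureTheory

/-- The Laplacian of `f` at `x` as the sum of second partial derivatives. -/
noncomputable def elap {n : ℕ} (f : EuclideanSpace ℝ (Fin n) → ℝ)
    (x : EuclideanSpace ℝ (Fin n)) : ℝ :=
  ∑ i, fderiv ℝ (fun y => fderiv ℝ f y (EuclideanSpace.single i 1)) x
    (EuclideanSpace.single i 1)

namespace RellichAux

variable {n : ℕ}

local notation "E" => EuclideanSpace ℝ (Fin n)

/-- Partial derivative in direction `i`. -/
noncomputable def pd (i : Fin n) (f : E → ℝ) (x : E) : ℝ :=
  fderiv ℝ f x (EuclideanSpace.single i 1)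

lemma elap_eq (f : E → ℝ) (x : E) : elap f x = ∑ i, pd i (pd i f) x := rfl

lemma pd_contDiff {k m : WithTop ℕ∞} {f : E → ℝ} (i : Fin n) (h : k + 1 ≤ m)
    (hf : ContDiff ℝ m f) : ContDiff ℝ k (pd i f) :=
  (hf.fderiv_right (m := k) h).clm_apply (contDiff_const (c := EuclideanSpace.single i 1))

lemma pd_contDiffOn {k m : WithTop ℕ∞} {f : E → ℝ} {s : Set E} (hs : IsOpen s) (i : Fin n)
    (h : k + 1 ≤ m) (hf : ContDiffOn ℝ m f s) : ContDiffOn ℝ k (pd i f) s :=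
  (hf.fderiv_of_isOpen hs (m := k) h).clm_apply (contDiffOn_const (c := EuclideanSpace.single i 1))

lemma pd_continuous {f : E → ℝ} (i : Fin n) (hf : ContDiff ℝ 1 f) :
    Continuous (pd i f) :=
  (pd_contDiff (k := 0) i (by norm_num) hf).continuous

lemma elap_continuous {f : E → ℝ} (hf : ContDiff ℝ 2 f) : Continuous (elap f) := by
  have : ∀ i : Fin n, Continuous (pd i (pd i f)) := fun i =>
    pd_continuous i (pd_contDiff (k := 1) i (by norm_num) hf)
  exact continuous_finset_sum _ fun i _ => this i

lemma elap_contDiffOn {k m : WithTop ℕ∞} {f : E → ℝ} {s : Set E} (hs : IsOpen s)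
    (h : k + 2 ≤ m) (hf : ContDiffOn ℝ m f s) : ContDiffOn ℝ k (elap f) s := by
  have : ∀ i : Fin n, ContDiffOn ℝ k (pd i (pd i f)) s := fun i => by
    refine pd_contDiffOn hs i le_rfl (pd_contDiffOn hs i ?_ hf)
    calc k + 1 + 1 = k + 2 := by rw [add_assoc]; norm_num
    _ ≤ m := h
  exact ContDiffOn.sum fun i _ => this i

lemma elap_continuousOn {f : E → ℝ} {s : Set E} (hs : IsOpen s)
    (hf : ContDiffOn ℝ 2 f s) : ContinuousOn (elap f) s :=
  (elap_contDiffOn (k := 0) hs (by norm_num) hf).continuousOn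

lemma pd_congr_of_eqOn {f g : E → ℝ} {s : Set E} (hs : IsOpen s)
    (h : ∀ y ∈ s, f y = g y) {x : E} (hx : x ∈ s) (i : Fin n) : pd i f x = pd i g x := by
  have : f =ᶠ[nhds x] g := Filter.eventuallyEq_of_mem (hs.mem_nhds hx) h
  simp only [pd, this.fderiv_eq]

lemma elap_congr_of_eqOn {f g : E → ℝ} {s : Set E} (hs : IsOpen s)
    (h : ∀ y ∈ s, f y = g y) {x : E} (hx : x ∈ s) : elap f x = elap g x := by
  simp only [elap_eq]
  refine Finset.sum_congr rfl fun i _ => ?_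
  exact pd_congr_of_eqOn hs (fun y hy => pd_congr_of_eqOn hs h hy i) hx i

lemma elap_zero_of_eqOn_zero {f : E → ℝ} {s : Set E} (hs : IsOpen s)
    (h : ∀ y ∈ s, f y = 0) {x : E} (hx : x ∈ s) : elap f x = 0 := by
  rw [elap_congr_of_eqOn hs h hx]
  have hz : ∀ i : Fin n, pd i (fun _ : E => (0:ℝ)) = fun _ => 0 := by
    intro i; funext y; simp [pd]
  simp only [elap_eq, hz]
  simp [pd]

/-! ### Green's identity -/

lemma pd_hasCompactSupport {f : E → ℝ} (i : Fin n) (hc : HasCompactSupport f) :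
    HasCompactSupport (pd i f) := by
  have : pd i f = (fun L : EuclideanSpace ℝ (Fin n) →L[ℝ] ℝ => L (EuclideanSpace.single i 1))
      ∘ fderiv ℝ f := rfl
  rw [this]
  exact (hc.fderiv ℝ).comp_left (by simp)

lemma lipschitz_of_c1_cs {f : E → ℝ} (hf : ContDiff ℝ 1 f) (hc : HasCompactSupport f) :
    ∃ C : NNReal, LipschitzWith C f := by
  obtain ⟨C, hC⟩ := (hf.continuous_fderiv one_ne_zero).bounded_above_of_compact_support (hc.fderiv ℝ)
  refine ⟨C.toNNReal, lipschitzWith_of_nnnorm_fderiv_le (hf.differentiable one_ne_zero) fun x => ?_⟩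
  have := hC x
  simp only [← norm_toNNReal]
  exact Real.toNNReal_mono (by simpa using this)

lemma ibp (F G : E → ℝ) (hF : ContDiff ℝ 2 F) (hG : ContDiff ℝ 2 G)
    (hFc : HasCompactSupport F) (hGc : HasCompactSupport G) (i : Fin n) :
    ∫ x, pd i (pd i G) x * F x = - ∫ x, pd i F x * pd i G x := by
  have hG1 : ContDiff ℝ 1 (pd i G) := pd_contDiff i (by norm_num) hG
  have hGc1 : HasCompactSupport (pd i G) := pd_hasCompactSupport i hGc
  obtain ⟨C, hCf⟩ := lipschitz_of_c1_cs hG1 hGc1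
  obtain ⟨D, hDF⟩ := lipschitz_of_c1_cs (hF.of_le (by norm_num)) hFc
  have key := LipschitzWith.integral_lineDeriv_mul_eq (μ := volume) hCf hDF hFc
    (EuclideanSpace.single i 1)
  have l1 : ∀ x : E, lineDeriv ℝ (pd i G) x (EuclideanSpace.single i 1) = pd i (pd i G) x :=
    fun x => (hG1.differentiable one_ne_zero x).lineDeriv_eq_fderiv
  have l2 : ∀ x : E, lineDeriv ℝ F x (-(EuclideanSpace.single i 1)) = -(pd i F x) := fun x => by
    rw [(hF.differentiable (by norm_num) x).lineDeriv_eq_fderiv]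
    simp [pd]
  simp only [l1, l2] at key
  rw [key, ← integral_neg]
  congr 1; funext x; ring

lemma green (F G : E → ℝ) (hF : ContDiff ℝ 2 F) (hG : ContDiff ℝ 2 G)
    (hFc : HasCompactSupport F) (hGc : HasCompactSupport G) :
    ∫ x, elap G x * F x = ∫ x, elap F x * G x := by
  have hint : ∀ (P Q : E → ℝ), ContDiff ℝ 2 P → ContDiff ℝ 2 Q → HasCompactSupport P →
      ∀ i : Fin n, Integrable (fun x => pd i (pd i Q) x * P x) := by
    intro P Q hP hQ hPc i
    apply Continuous.integrable_of_hasCompactSupport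
    · exact ((pd_contDiff (k := 0) i (by norm_num)
        (pd_contDiff (k := 1) i (by norm_num) hQ)).continuous).mul (hP.continuous)
    · exact hPc.mul_left
  have expand : ∀ (P Q : E → ℝ), ContDiff ℝ 2 P → ContDiff ℝ 2 Q → HasCompactSupport P →
      ∫ x, elap Q x * P x = ∑ i : Fin n, ∫ x, pd i (pd i Q) x * P x := by
    intro P Q hP hQ hPc
    have : ∀ x : E, elap Q x * P x = ∑ i : Fin n, pd i (pd i Q) x * P x := by
      intro x; rw [elap, Finset.sum_mul]; rfl
    simp only [this]
    exact integral_finset_sum _ fun i _ => hint P Q hP hQ hPc i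
  rw [expand F G hF hG hFc, expand G F hG hF hGc]
  refine Finset.sum_congr rfl fun i _ => ?_
  rw [ibp F G hF hG hFc hGc i, ibp G F hG hF hGc hFc i, neg_inj]
  congr 1; funext x; ring

/-! ### pointwise calculus -/

lemma pd_mul {f g : E → ℝ} {x : E} (hf : DifferentiableAt ℝ f x)
    (hg : DifferentiableAt ℝ g x) (i : Fin n) :
    pd i (fun y => f y * g y) x = f x * pd i g x + g x * pd i f x := by
  simp only [pd, fderiv_fun_mul hf hg]
  simp

lemma pd_const_mul {f : E → ℝ} {x : E} (hf : DifferentiableAt ℝ f x) (c : ℝ) (i : Fin n) :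
    pd i (fun y => c * f y) x = c * pd i f x := by
  simp only [pd, fderiv_const_mul hf]
  simp

lemma pd_sub {f g : E → ℝ} {x : E} (hf : DifferentiableAt ℝ f x)
    (hg : DifferentiableAt ℝ g x) (i : Fin n) :
    pd i (fun y => f y - g y) x = pd i f x - pd i g x := by
  simp only [pd, fderiv_fun_sub hf hg]
  simp

lemma pd_inv {f : E → ℝ} {x : E} (hf : DifferentiableAt ℝ f x) (h0 : f x ≠ 0) (i : Fin n) :
    pd i (fun y => (f y)⁻¹) x = -(((f x) ^ 2)⁻¹) * pd i f x := by
  have h : HasFDerivAt (fun y => (f y)⁻¹)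
      ((-ContinuousLinearMap.mulLeftRight ℝ ℝ (f x)⁻¹ (f x)⁻¹).comp (fderiv ℝ f x)) x :=
    (hasFDerivAt_inv' h0).comp x hf.hasFDerivAt
  simp only [pd, h.fderiv]
  simp only [ContinuousLinearMap.comp_apply, ContinuousLinearMap.neg_apply,
    ContinuousLinearMap.mulLeftRight_apply]
  rw [pow_two, mul_inv]
  ring

/-- First derivative of `u² / v` on the open set where `v > 0`. -/
lemma pd_quot_eq {U : Set E} (hU : IsOpen U) {u v : E → ℝ} (hu : ContDiff ℝ 2 u)
    (hv : ContDiffOn ℝ 2 v U) (hvpos : ∀ y ∈ U, 0 < v y) {y : E} (hy : y ∈ U) (i : Fin n) :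
    pd i (fun z => u z ^ 2 * (v z)⁻¹) y =
      (v y)⁻¹ * (2 * u y * pd i u y) - u y ^ 2 * ((v y) ^ 2)⁻¹ * pd i v y := by
  have hud : DifferentiableAt ℝ u y := hu.differentiable (by norm_num) y
  have hvd : DifferentiableAt ℝ v y :=
    (hv.differentiableOn (by norm_num)).differentiableAt (hU.mem_nhds hy)
  have hv0 : v y ≠ 0 := ne_of_gt (hvpos y hy)
  have e1 : (fun z => u z ^ 2 * (v z)⁻¹) = fun z => (u z * u z) * (v z)⁻¹ := by
    funext z; ring
  rw [e1, pd_mul (f := fun z => u z * u z) (g := fun z => (v z)⁻¹) (hud.mul hud) (hvd.inv hv0) i, pd_mul hud hud i, pd_inv hvd hv0 i]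
  ring

/-- Second derivative identity for `u² / v`. -/
lemma pd_pd_quot {U : Set E} (hU : IsOpen U) {u v : E → ℝ} (hu : ContDiff ℝ 2 u)
    (hv : ContDiffOn ℝ 2 v U) (hvpos : ∀ y ∈ U, 0 < v y) {x : E} (hx : x ∈ U) (i : Fin n) :
    pd i (pd i (fun y => u y ^ 2 * (v y)⁻¹)) x =
      2 * u x * (v x)⁻¹ * pd i (pd i u) x - u x ^ 2 * ((v x) ^ 2)⁻¹ * pd i (pd i v) x
      + 2 * (v x)⁻¹ * (pd i u x - u x * (v x)⁻¹ * pd i v x) ^ 2 := by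
  have hud : DifferentiableAt ℝ u x := hu.differentiable (by norm_num) x
  have hvd : DifferentiableAt ℝ v x :=
    (hv.differentiableOn (by norm_num)).differentiableAt (hU.mem_nhds hx)
  have hv0 : v x ≠ 0 := ne_of_gt (hvpos x hx)
  have hpud : DifferentiableAt ℝ (pd i u) x :=
    (pd_contDiff (k := 1) i (by norm_num) hu).differentiable (by norm_num) x
  have hpvd : DifferentiableAt ℝ (pd i v) x :=
    ((pd_contDiffOn (k := 1) hU i (by norm_num) hv).differentiableOn
      (by norm_num)).differentiableAt (hU.mem_nhds hx)
  have step1 : pd i (pd i (fun y => u y ^ 2 * (v y)⁻¹)) x =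
      pd i (fun y => (v y)⁻¹ * (2 * u y * pd i u y)
        - (u y * u y) * (((v y) * (v y))⁻¹) * pd i v y) x := by
    refine pd_congr_of_eqOn hU (fun y hy => ?_) hx i
    rw [pd_quot_eq hU hu hv hvpos hy i]
    ring_nf
  rw [step1]
  have dA1 : DifferentiableAt ℝ (fun y => (v y)⁻¹) x := hvd.inv hv0
  have dA2 : DifferentiableAt ℝ (fun y => 2 * u y * pd i u y) x := by
    have : DifferentiableAt ℝ (fun y => u y * pd i u y) x := hud.mul hpud
    simpa [mul_assoc] using this.const_mul 2
  have dB1 : DifferentiableAt ℝ (fun y => u y * u y) x := hud.mul hud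
  have dB2 : DifferentiableAt ℝ (fun y => ((v y) * (v y))⁻¹) x :=
    (hvd.mul hvd).inv (mul_ne_zero hv0 hv0)
  rw [pd_sub (f := fun y => (v y)⁻¹ * (2 * u y * pd i u y))
    (g := fun y => u y * u y * (v y * v y)⁻¹ * pd i v y) (dA1.mul dA2) ((dB1.mul dB2).mul hpvd) i]
  rw [pd_mul dA1 dA2 i]
  rw [pd_mul (f := fun y => u y * u y * (v y * v y)⁻¹) (dB1.mul dB2) hpvd i]
  rw [pd_mul dB1 dB2 i]
  rw [pd_inv hvd hv0 i]
  rw [pd_inv (f := fun y => v y * v y) (hvd.mul hvd) (mul_ne_zero hv0 hv0) i]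
  have e2 : pd i (fun y => 2 * u y * pd i u y) x
      = 2 * (u x * pd i (pd i u) x + pd i u x * pd i u x) := by
    have : (fun y => 2 * u y * pd i u y) = fun y => 2 * (u y * pd i u y) := by
      funext y; ring
    rw [this, pd_const_mul (f := fun y => u y * pd i u y) (hud.mul hpud) 2 i, pd_mul hud hpud i]
  rw [e2, pd_mul hvd hvd i, pd_mul hud hud i]
  field_simp
  ring

lemma elap_quot {U : Set E} (hU : IsOpen U) {u v : E → ℝ} (hu : ContDiff ℝ 2 u)
    (hv : ContDiffOn ℝ 2 v U) (hvpos : ∀ y ∈ U, 0 < v y) {x : E} (hx : x ∈ U) :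
    elap (fun y => u y ^ 2 * (v y)⁻¹) x =
      2 * u x * (v x)⁻¹ * elap u x - u x ^ 2 * ((v x) ^ 2)⁻¹ * elap v x
      + 2 * (v x)⁻¹ * ∑ i, (pd i u x - u x * (v x)⁻¹ * pd i v x) ^ 2 := by
  rw [elap_eq]
  rw [Finset.sum_congr rfl fun i _ => pd_pd_quot hU hu hv hvpos hx i]
  rw [Finset.sum_add_distrib, Finset.sum_sub_distrib, ← Finset.mul_sum, ← Finset.mul_sum,
    ← Finset.mul_sum, elap_eq, elap_eq]

/-- Second-order Picone-type inequality. -/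
lemma picone {U : Set E} (hU : IsOpen U) {u v : E → ℝ} (hu : ContDiff ℝ 2 u)
    (hv : ContDiffOn ℝ 2 v U) (hvpos : ∀ y ∈ U, 0 < v y) {x : E} (hx : x ∈ U)
    (hlap : elap v x ≤ 0) {Wx : ℝ} (hW : 0 ≤ Wx) :
    (Wx * elap v x) * elap (fun y => u y ^ 2 * (v y)⁻¹) x ≤ Wx * (elap u x) ^ 2 := by
  rw [elap_quot hU hu hv hvpos hx]
  have hb : 0 < v x := hvpos x hx
  set S := ∑ i, (pd i u x - u x * (v x)⁻¹ * pd i v x) ^ 2 with hS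
  have hSnn : 0 ≤ S := Finset.sum_nonneg fun i _ => sq_nonneg _
  set t := (v x)⁻¹ with ht
  have htpos : 0 < t := inv_pos.mpr hb
  have ht2 : ((v x) ^ 2)⁻¹ = t ^ 2 := by rw [ht, ← inv_pow]
  rw [ht2]
  set a := u x
  set L := elap v x
  set M := elap u x
  have h1 : 0 ≤ Wx * (M - a * t * L) ^ 2 := mul_nonneg hW (sq_nonneg _)
  have h2 : 0 ≤ Wx * t * (-L) * S :=
    mul_nonneg (mul_nonneg (mul_nonneg hW htpos.le) (neg_nonneg.mpr hlap)) hSnn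
  nlinarith [h1, h2]

/-- `IntegrableOn` by zero extension. -/
lemma integrableOn_of_eq_zero_off {f : E → ℝ} {s t : Set E}
    (hIt : IntegrableOn f t) (hst : MeasurableSet (s \ t))
    (h0 : ∀ x ∈ s \ t, f x = 0) : IntegrableOn f s := by
  have h1 : IntegrableOn f (s \ t) := by
    rw [integrableOn_congr_fun h0 hst]
    exact integrableOn_zero
  exact (h1.union hIt).mono_set fun x hx => by
    by_cases hxt : x ∈ t
    · exact Or.inr hxt
    · exact Or.inl ⟨hx, hxt⟩

end RellichAux

open RellichAux Set Manifold

/-- Rellich inequality with a Bessel pair (case `p = 2`): if `v > 0`, `−Δv > 0` a.e.,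
and `Δ(WΔv) ≥ Hv` on `Ω`, then `∫_Ω W|Δu|² ≥ ∫_Ω H u²` for nonnegative `u ∈ C²_c(Ω)`. -/
theorem rellich_bessel_pair {n : ℕ} (Ω : Set (EuclideanSpace ℝ (Fin n)))
    (hΩo : IsOpen Ω) (hΩc : IsConnected Ω) (hΩb : Bornology.IsBounded Ω)
    (W H v : EuclideanSpace ℝ (Fin n) → ℝ)
    (hW : ContDiffOn ℝ 2 W Ω) (hWpos : ∀ x ∈ Ω, 0 < W x)
    (hH : LocallyIntegrableOn H Ω) (hHpos : ∀ x ∈ Ω, 0 < H x)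
    (hv : ContDiffOn ℝ 4 v Ω) (hvpos : ∀ x ∈ Ω, 0 < v x)
    (hvlap : ∀ᵐ x ∂(volume.restrict Ω), 0 < -elap v x)
    (hsup : ∀ x ∈ Ω, H x * v x ≤ elap (fun y => W y * elap v y) x)
    (u : EuclideanSpace ℝ (Fin n) → ℝ)
    (hu : ContDiff ℝ 2 u) (hucs : HasCompactSupport u) (husupp : tsupport u ⊆ Ω)
    (hu0 : ∀ x, 0 ≤ u x) :
    ∫ x in Ω, H x * u x ^ 2 ≤ ∫ x in Ω, W x * (elap u x) ^ 2 := by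
  classical
  have hΩm : MeasurableSet Ω := hΩo.measurableSet
  set K : Set (EuclideanSpace ℝ (Fin n)) := tsupport u with hKdef
  have hKc : IsCompact K := hucs
  have hKΩ : K ⊆ Ω := husupp
  obtain ⟨K₁, hK₁c, hKK₁, hK₁Ω⟩ := exists_compact_between hKc hΩo hKΩ
  obtain ⟨K₂, hK₂c, hK₁K₂, hK₂Ω⟩ := exists_compact_between hK₁c hΩo hK₁Ω
  -- smooth cutoff
  obtain ⟨φ₀, hφ0, hφ1, hφ01⟩ := exists_contMDiffMap_zero_one_of_isClosed (n := 2)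
    (𝓘(ℝ, EuclideanSpace ℝ (Fin n)))
    (isClosed_compl_iff.mpr (isOpen_interior : IsOpen (interior K₂)))
    hK₁c.isClosed (Set.disjoint_left.mpr fun x hx hxK₁ => hx (hK₁K₂ hxK₁))
  set φ : EuclideanSpace ℝ (Fin n) → ℝ := ⇑φ₀ with hφdef
  have hφ2 : ContDiff ℝ 2 φ := by
    have := φ₀.contMDiff
    rw [contMDiff_iff_contDiff] at this
    exact this.of_le (by decide)
  have hφsupp : tsupport φ ⊆ K₂ := by
    refine closure_minimal (fun x hx => ?_) hK₂c.isClosed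
    by_contra hxK₂
    have hxint : x ∈ (interior K₂)ᶜ := fun h => hxK₂ (interior_subset h)
    exact hx (hφ0 hxint)
  have hφcs : HasCompactSupport φ := hK₂c.of_isClosed_subset isClosed_closure hφsupp
  have hφone : ∀ y ∈ interior K₁, φ y = 1 := fun y hy => hφ1 (interior_subset hy)
  -- the two auxiliary functions
  set G : EuclideanSpace ℝ (Fin n) → ℝ := fun y => u y ^ 2 * (v y)⁻¹ with hGdef
  set F : EuclideanSpace ℝ (Fin n) → ℝ := fun y => φ y * (W y * elap v y) with hFdef
  have hv2 : ContDiffOn ℝ 2 v Ω := hv.of_le (by decide)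
  have huzero : ∀ y ∉ K, u y = 0 := fun y hy => image_eq_zero_of_notMem_tsupport hy
  have hGzero : ∀ y ∉ K, G y = 0 := fun y hy => by simp [hGdef, huzero y hy]
  have hGcs : HasCompactSupport G := HasCompactSupport.intro hKc hGzero
  have hG2 : ContDiff ℝ 2 G := by
    rw [contDiff_iff_contDiffAt]
    intro x
    by_cases hx : x ∈ Ω
    · have h1 : ContDiffAt ℝ 2 u x := hu.contDiffAt
      have h2 : ContDiffAt ℝ 2 v x := hv2.contDiffAt (hΩo.mem_nhds hx)
      exact ((h1.mul h1).congr_of_eventuallyEq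
        (by filter_upwards with y; ring)).mul (h2.inv (ne_of_gt (hvpos x hx)))
    · have hxK : x ∉ K := fun h => hx (hKΩ h)
      refine (contDiffAt_const (c := (0:ℝ))).congr_of_eventuallyEq ?_
      filter_upwards [hKc.isClosed.isOpen_compl.mem_nhds hxK] with y hy
      exact hGzero y hy
  have hWv2 : ContDiffOn ℝ 2 (fun y => W y * elap v y) Ω :=
    hW.mul (elap_contDiffOn hΩo (by decide) hv)
  have hFzero : ∀ y ∉ tsupport φ, F y = 0 := fun y hy => by
    simp [hFdef, image_eq_zero_of_notMem_tsupport hy]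
  have hFcs : HasCompactSupport F :=
    HasCompactSupport.intro (hK₂c.of_isClosed_subset isClosed_closure hφsupp) hFzero
  have hF2 : ContDiff ℝ 2 F := by
    rw [contDiff_iff_contDiffAt]
    intro x
    by_cases hx : x ∈ Ω
    · exact (hφ2.contDiffAt).mul (hWv2.contDiffAt (hΩo.mem_nhds hx))
    · have hxφ : x ∉ tsupport φ := fun h => hx (hK₂Ω (hφsupp h))
      refine (contDiffAt_const (c := (0:ℝ))).congr_of_eventuallyEq ?_
      filter_upwards [(isClosed_tsupport φ).isOpen_compl.mem_nhds hxφ] with y hy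
      exact hFzero y hy
  -- elap G vanishes off K
  have hlapGzero : ∀ y ∉ K, elap G y = 0 := fun y hy =>
    elap_zero_of_eqOn_zero hKc.isClosed.isOpen_compl (fun z hz => hGzero z hz) hy
  have hlapuzero : ∀ y ∉ K, elap u y = 0 := fun y hy =>
    elap_zero_of_eqOn_zero hKc.isClosed.isOpen_compl (fun z hz => huzero z hz) hy
  -- pointwise claims
  have claim1 : ∀ x ∈ Ω, H x * u x ^ 2 ≤ G x * elap (fun y => W y * elap v y) x := by
    intro x hx
    have hb : 0 < v x := hvpos x hx
    have hGnn : 0 ≤ G x := by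
      have : (0:ℝ) ≤ u x ^ 2 * (v x)⁻¹ := mul_nonneg (sq_nonneg _) (inv_nonneg.mpr hb.le)
      simpa [hGdef] using this
    have hu2 : u x ^ 2 = G x * v x := by
      simp only [hGdef]
      field_simp
    calc H x * u x ^ 2 = G x * (H x * v x) := by rw [hu2]; ring
    _ ≤ G x * elap (fun y => W y * elap v y) x :=
        mul_le_mul_of_nonneg_left (hsup x hx) hGnn
  have claim2 : ∀ x ∈ Ω, G x * elap (fun y => W y * elap v y) x = G x * elap F x := by
    intro x hx
    by_cases hxK : x ∈ interior K₁
    · have : elap (fun y => W y * elap v y) x = elap F x := by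
        refine (elap_congr_of_eqOn isOpen_interior (fun y hy => ?_) hxK).symm
        simp [hFdef, hφone y hy]
      rw [this]
    · have hxK' : x ∉ K := fun h => hxK (hKK₁ h)
      simp [hGzero x hxK']
  -- integrability facts
  have hGcont : Continuous G := hG2.continuous
  have hFcont : Continuous F := hF2.continuous
  have hlapFcont : Continuous (elap F) := elap_continuous hF2
  have hlapGcont : Continuous (elap G) := elap_continuous hG2
  have I3 : Integrable (fun x => G x * elap F x) :=
    (hGcont.mul hlapFcont).integrable_of_hasCompactSupport hGcs.mul_right
  have I2 : Integrable (fun x => F x * elap G x) :=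
    (hFcont.mul hlapGcont).integrable_of_hasCompactSupport hFcs.mul_right
  have I1 : IntegrableOn (fun x => H x * u x ^ 2) Ω := by
    have hIK : IntegrableOn H K := hH.integrableOn_compact_subset hKΩ hKc
    have hbd : ∃ C, ∀ x, ‖u x ^ 2‖ ≤ C := by
      refine (hu.continuous.pow 2).bounded_above_of_compact_support ?_
      exact HasCompactSupport.intro hKc fun x hx => by simp [huzero x hx]
    have hIK2 : IntegrableOn (fun x => H x * u x ^ 2) K := by
      have h := hIK.bdd_mul ((hu.continuous.pow 2).aestronglyMeasurable)
        (Filter.Eventually.of_forall hbd.choose_spec)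
      exact h.congr (Filter.Eventually.of_forall fun x => mul_comm _ _)
    refine integrableOn_of_eq_zero_off hIK2 (hΩm.diff hKc.measurableSet) fun x hx => ?_
    simp [huzero x hx.2]
  have I4 : IntegrableOn (fun x => W x * (elap u x) ^ 2) Ω := by
    have hIK : IntegrableOn (fun x => W x * (elap u x) ^ 2) K := by
      apply ContinuousOn.integrableOn_compact hKc
      exact ((hW.continuousOn.mono hKΩ).mul
        (((elap_continuous hu).pow 2).continuousOn))
    refine integrableOn_of_eq_zero_off hIK (hΩm.diff hKc.measurableSet) fun x hx => ?_
    simp [hlapuzero x hx.2]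
  have IB : IntegrableOn (fun x => G x * elap (fun y => W y * elap v y) x) Ω := by
    rw [integrableOn_congr_fun claim2 hΩm]
    exact I3.integrableOn
  -- chain of (in)equalities
  have step1 : ∫ x in Ω, H x * u x ^ 2 ≤
      ∫ x in Ω, G x * elap (fun y => W y * elap v y) x :=
    setIntegral_mono_on I1 IB hΩm claim1
  have step2 : ∫ x in Ω, G x * elap (fun y => W y * elap v y) x
      = ∫ x in Ω, G x * elap F x :=
    setIntegral_congr_fun hΩm claim2
  have step3 : ∫ x in Ω, G x * elap F x = ∫ x, G x * elap F x :=
    setIntegral_eq_integral_of_forall_compl_eq_zero fun x hx => by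
      simp [hGzero x (fun h => hx (hKΩ h))]
  have step4 : ∫ x, G x * elap F x = ∫ x, F x * elap G x := by
    have hgreen := green F G hF2 hG2 hFcs hGcs
    calc ∫ x, G x * elap F x = ∫ x, elap F x * G x := by
          congr 1; funext x; ring
    _ = ∫ x, elap G x * F x := hgreen.symm
    _ = ∫ x, F x * elap G x := by congr 1; funext x; ring
  have step5 : ∫ x, F x * elap G x = ∫ x in Ω, F x * elap G x :=
    (setIntegral_eq_integral_of_forall_compl_eq_zero fun x hx => by
      simp [hlapGzero x (fun h => hx (hKΩ h))]).symm
  have step6 : ∫ x in Ω, F x * elap G x ≤ ∫ x in Ω, W x * (elap u x) ^ 2 := by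
    refine integral_mono_ae I2.integrableOn I4 ?_
    filter_upwards [hvlap, ae_restrict_mem hΩm] with x hlapv hx
    by_cases hxK : x ∈ interior K₁
    · have hFx : F x = W x * elap v x := by simp [hFdef, hφone x hxK]
      have hpic := picone hΩo hu hv2 hvpos hx (by linarith [hlapv]) (hWpos x hx).le
      calc F x * elap G x = (W x * elap v x) * elap G x := by rw [hFx]
      _ ≤ W x * (elap u x) ^ 2 := by
          simpa [hGdef] using hpic
    · have hxK' : x ∉ K := fun h => hxK (hKK₁ h)
      rw [hlapGzero x hxK']
      simpa using mul_nonneg (hWpos x hx).le (sq_nonneg (elap u x))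
  calc ∫ x in Ω, H x * u x ^ 2
      ≤ ∫ x in Ω, G x * elap (fun y => W y * elap v y) x := step1
  _ = ∫ x in Ω, G x * elap F x := step2
  _ = ∫ x, G x * elap F x := step3
  _ = ∫ x, F x * elap G x := step4
  _ = ∫ x in Ω, F x * elap G x := step5
  _ ≤ ∫ x in Ω, W x * (elap u x) ^ 2 := step6
end
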